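/- Norm bound for multi-commutators of local operators (Lemma 11): let A_1, …, A_M be operators on n qudits with A_s = ∑_X a_{s,X}, where each a_{s,X} is supported on a set X of at most k_s sites and max_i ∑_{X∋i} ‖a_{s,X}‖ ≤ g_s. Then for every operator O supported on a set X₀ of sites, ‖ad_{A_M} ad_{A_{M−1}} ⋯ ad_{A_1}(O)‖ ≤ ( ∏_{m=1}^{M} 2 g_m K_m ) · ‖O‖, where K_m = |X₀| + ∑_{s=1}^{m−1} k_s. -/

import Mathlib

open scoped BigOperators

namespace Paper

variable {ι : Type*} [Fintype ι] [DecidableEq ι] {d : ℕ}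

/-- The space of operators on a system of qudits indexed by `ι`, each of local dimension `d`. -/
abbrev Op (ι : Type*) [Fintype ι] [DecidableEq ι] (d : ℕ) : Type _ :=
  Matrix (ι → Fin d) (ι → Fin d) ℂ

open Classical in
/-- `A` acts as the identity on all sites outside `X`. -/
def SupportedOn (X : Set ι) (A : Op ι d) : Prop :=
  ∃ B : Matrix (X → Fin d) (X → Fin d) ℂ,
    ∀ i j : ι → Fin d,
      A i j = if ∀ x ∉ X, i x = j x then B (fun x => i x.1) (fun x => j x.1) else 0

/-- Operator norm of a matrix, i.e. the norm as an operator on Euclidean space. -/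
noncomputable def opNorm {m : Type*} [Fintype m] [DecidableEq m] (A : Matrix m m ℂ) : ℝ :=
  ‖Matrix.toEuclideanCLM (𝕜 := ℂ) A‖

/-- Schatten `p`-norm `(Tr ((A† A)^{p/2}))^{1/p}` of a matrix. -/
noncomputable def schattenNorm {m : Type*} [Fintype m] [DecidableEq m] (p : ℝ)
    (A : Matrix m m ℂ) : ℝ :=
  (∑ i, (Matrix.isHermitian_conjTranspose_mul_self A).eigenvalues i ^ (p / 2)) ^ (1 / p)

/-- Matrix exponential. -/
noncomputable def mexp {m : Type*} [Fintype m] [DecidableEq m] (A : Matrix m m ℂ) :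
    Matrix m m ℂ :=
  NormedSpace.exp A

/-- The Gibbs state `e^{-βH} / Tr e^{-βH}`. -/
noncomputable def gibbs (β : ℝ) (H : Op ι d) : Op ι d :=
  (Matrix.trace (mexp ((-(β : ℂ)) • H)))⁻¹ • mexp ((-(β : ℂ)) • H)

/-- Reduced density matrix on the sites in `L` (partial trace over the complement). -/
noncomputable def restrictOut (L : Finset ι) (ρ : Op ι d) :
    Matrix ({x // x ∈ L} → Fin d) ({x // x ∈ L} → Fin d) ℂ :=
  Matrix.of fun a b =>
    ∑ c : {x // x ∉ L} → Fin d,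
      ρ (fun x => if h : x ∈ L then a ⟨x, h⟩ else c ⟨x, h⟩)
        (fun x => if h : x ∈ L then b ⟨x, h⟩ else c ⟨x, h⟩)

open Classical in
/-- Von Neumann entropy `-Tr ρ log ρ` (via eigenvalues; junk value for non-Hermitian input). -/
noncomputable def vnEntropy {m : Type*} [Fintype m] [DecidableEq m] (ρ : Matrix m m ℂ) : ℝ :=
  if h : ρ.IsHermitian then -∑ i, h.eigenvalues i * Real.log (h.eigenvalues i) else 0

open Classical in
/-- Rényi-`α` entropy; for `α = 1` this is the von Neumann entropy. -/
noncomputable def renyiEntropy {m : Type*} [Fintype m] [DecidableEq m] (α : ℝ)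
    (ρ : Matrix m m ℂ) : ℝ :=
  if h : ρ.IsHermitian then
    if α = 1 then -∑ i, h.eigenvalues i * Real.log (h.eigenvalues i)
    else (1 - α)⁻¹ * Real.log (∑ i, h.eigenvalues i ^ α)
  else 0

/-- Mutual information `S(ρ_L) + S(ρ_{Lᶜ}) - S(ρ)` for the bipartition `L ⊔ Lᶜ`. -/
noncomputable def mutualInfo (L : Finset ι) (ρ : Op ι d) : ℝ :=
  vnEntropy (restrictOut L ρ) + vnEntropy (restrictOut Lᶜ ρ) - vnEntropy ρ

/-- `O` admits a Schmidt decomposition with `m` terms across the bipartition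
`Lset ⊔ Lsetᶜ`; i.e. the Schmidt rank of `O` across this cut is at most `m`. -/
def SchmidtDecompSet (Lset : Set ι) (O : Op ι d) (m : ℕ) : Prop :=
  ∃ A B : Fin m → Op ι d,
    (∀ s, SupportedOn Lset (A s)) ∧ (∀ s, SupportedOn Lsetᶜ (B s)) ∧ O = ∑ s, A s * B s

/-- Schmidt decomposition across the cut `{1,…,i} | {i+1,…,n}` of a chain
(`0`-indexed: left part is the sites `< i`). -/
def SchmidtDecomp {n : ℕ} (i : ℕ) (O : Op (Fin n) d) (m : ℕ) : Prop :=
  SchmidtDecompSet {x : Fin n | (x : ℕ) < i} O m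

/-- A function of the configuration of all sites depends only on the sites in `Lset`. -/
def DependsOnlyOn (Lset : Set ι) (f : (ι → Fin d) → ℂ) : Prop :=
  ∀ u v : ι → Fin d, (∀ x ∈ Lset, u x = v x) → f u = f v

/-- Schmidt decomposition with `m` terms of a vector across the bipartition `Lset ⊔ Lsetᶜ`. -/
def VecSchmidtDecomp (Lset : Set ι) (ψ : (ι → Fin d) → ℂ) (m : ℕ) : Prop :=
  ∃ a b : Fin m → ((ι → Fin d) → ℂ),
    (∀ s, DependsOnlyOn Lset (a s)) ∧ (∀ s, DependsOnlyOn Lsetᶜ (b s)) ∧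
      ∀ u, ψ u = ∑ s, a s u * b s u

/-- The rank-one density matrix `|ψ⟩⟨ψ|`. -/
noncomputable def pureDM (ψ : (ι → Fin d) → ℂ) : Op ι d :=
  Matrix.of fun u v => ψ u * (starRingEnd ℂ) (ψ v)

/-- A nearest-neighbour Hamiltonian on a chain of `n` qudits: `h i` is the interaction
between sites `i` and `i+1` (`0`-indexed), and
`‖h_{i-1,i}‖ + ‖h_{i,i+1}‖ ≤ 1` for every site `i`. -/
structure NNChain (n d : ℕ) where
  h : ℕ → Op (Fin n) d
  supported : ∀ i : ℕ, SupportedOn {x : Fin n | (x : ℕ) = i ∨ (x : ℕ) = i + 1} (h i)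
  hermitian : ∀ i : ℕ, (h i).IsHermitian
  norm_le : ∀ i : ℕ, 1 ≤ i → opNorm (h (i - 1)) + opNorm (h i) ≤ 1

/-- The Hamiltonian `H = ∑_{i=1}^{n-1} h_{i,i+1}` of a nearest-neighbour chain. -/
noncomputable def NNChain.H {n d : ℕ} (C : NNChain n d) : Op (Fin n) d :=
  ∑ i ∈ Finset.range (n - 1), C.h i

/-- A `k`-local Hamiltonian on a chain of `n` qudits with interaction strength `g`:
a collection of Hermitian terms `h X` supported on sets `X` of diameter at most `k`,
with `∑_{X ∋ i} ‖h X‖ ≤ g` for every site `i`. -/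
structure KLocal (n d k : ℕ) (g : ℝ) where
  h : Finset (Fin n) → Op (Fin n) d
  supported : ∀ X : Finset (Fin n), SupportedOn (X : Set (Fin n)) (h X)
  hermitian : ∀ X : Finset (Fin n), (h X).IsHermitian
  diam_le : ∀ X : Finset (Fin n), h X ≠ 0 → ∀ x ∈ X, ∀ y ∈ X, (y : ℕ) < (x : ℕ) + k
  strength : ∀ i : Fin n,
    ∑ X ∈ Finset.univ.filter (fun X : Finset (Fin n) => i ∈ X), opNorm (h X) ≤ g
  empty_zero : h ∅ = 0

/-- The full Hamiltonian `H = ∑_X h_X` of a `k`-local chain. -/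
noncomputable def KLocal.H {n d k : ℕ} {g : ℝ} (C : KLocal n d k g) : Op (Fin n) d :=
  ∑ X : Finset (Fin n), C.h X

section MultiCommAux

variable {n : ℕ}
def Supp' (X : Finset (Fin n)) (A : Op (Fin n) d) : Prop :=
  (∀ i j : Fin n → Fin d, (∃ x, x ∉ X ∧ i x ≠ j x) → A i j = 0) ∧
  (∀ i j w : Fin n → Fin d, (∀ x, x ∉ X → i x = j x) →
    A i j = A (fun x => if x ∈ X then i x else w x) (fun x => if x ∈ X then j x else w x))


lemma supp'_of_supportedOn {X : Finset (Fin n)} {A : Op (Fin n) d}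
    (h : SupportedOn (X : Set (Fin n)) A) : Supp' X A := by
  obtain ⟨B, hB⟩ := h
  constructor
  · rintro i j ⟨x, hx, hne⟩
    rw [hB, if_neg]
    push_neg
    exact ⟨x, by simpa using hx, hne⟩
  · intro i j w hij
    rw [hB, hB, if_pos, if_pos]
    · congr 1 <;> funext x <;>
        simp [Finset.mem_coe.mp x.2]
    · intro x hx
      simp only [Finset.mem_coe] at hx
      simp [hx]
    · intro x hx
      exact hij x (by simpa using hx)

lemma supp'_zero (X : Finset (Fin n)) : Supp' X (0 : Op (Fin n) d) := by
  constructor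
  · intro i j _; rfl
  · intro i j w _; rfl

lemma supp'_sub {X : Finset (Fin n)} {A B : Op (Fin n) d}
    (hA : Supp' X A) (hB : Supp' X B) : Supp' X (A - B) := by
  constructor
  · intro i j h
    have : (A - B) i j = A i j - B i j := rfl
    rw [this, hA.1 i j h, hB.1 i j h, sub_zero]
  · intro i j w hij
    have h1 : ∀ C D : Op (Fin n) d, (C - D) i j = C i j - D i j := fun _ _ => rfl
    show A i j - B i j = _
    rw [hA.2 i j w hij, hB.2 i j w hij]; rfl

lemma supp'_comm {X Y : Finset (Fin n)} {A B : Op (Fin n) d}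
    (hd : ∀ x ∈ X, x ∉ Y) (hA : Supp' X A) (hB : Supp' Y B) : A * B = B * A := by
  ext i j
  rw [Matrix.mul_apply, Matrix.mul_apply]
  by_cases hij : ∀ x, x ∉ X → x ∉ Y → i x = j x
  · set k₀ : Fin n → Fin d := fun x => if x ∈ X then j x else i x with hk₀
    set k₁ : Fin n → Fin d := fun x => if x ∈ Y then j x else i x with hk₁
    have hL : ∑ k, A i k * B k j = A i k₀ * B k₀ j := by
      apply Finset.sum_eq_single_of_mem k₀ (Finset.mem_univ _)
      intro k _ hk
      obtain ⟨x, hx⟩ := Function.ne_iff.mp hk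
      by_cases hxX : x ∈ X
      · have : B k j = 0 := hB.1 k j ⟨x, hd x hxX, by simpa [hk₀, hxX] using hx⟩
        rw [this, mul_zero]
      · have hkx : k x ≠ i x := by simpa [hk₀, hxX] using hx
        rw [hA.1 i k ⟨x, hxX, Ne.symm hkx⟩, zero_mul]
    have hR : ∑ k, B i k * A k j = B i k₁ * A k₁ j := by
      apply Finset.sum_eq_single_of_mem k₁ (Finset.mem_univ _)
      intro k _ hk
      obtain ⟨x, hx⟩ := Function.ne_iff.mp hk
      by_cases hxY : x ∈ Y
      · have hxX : x ∉ X := fun h => hd x h hxY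
        have : A k j = 0 := hA.1 k j ⟨x, hxX, by simpa [hk₁, hxY] using hx⟩
        rw [this, mul_zero]
      · have hkx : k x ≠ i x := by simpa [hk₁, hxY] using hx
        rw [hB.1 i k ⟨x, hxY, Ne.symm hkx⟩, zero_mul]
    rw [hL, hR]
    have e1 : A i k₀ = A k₁ j := by
      rw [hA.2 i k₀ i (fun x hx => by simp [hk₀, hx]),
          hA.2 k₁ j i (fun x hx => by
            by_cases hxY : x ∈ Y
            · simp [hk₁, hxY]
            · simp only [hk₁]; rw [if_neg hxY]; exact hij x hx hxY)]
      congr 1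
      · funext x
        by_cases hx : x ∈ X
        · simp [hk₁, hx, hd x hx]
        · simp [hx]
      · funext x
        by_cases hx : x ∈ X
        · simp [hk₀, hx]
        · simp [hx]
    have e2 : B k₀ j = B i k₁ := by
      rw [hB.2 k₀ j j (fun x hx => by
            by_cases hxX : x ∈ X
            · simp [hk₀, hxX]
            · simp only [hk₀]; rw [if_neg hxX]; exact hij x hxX hx),
          hB.2 i k₁ j (fun x hx => by simp [hk₁, hx])]
      congr 1
      · funext x
        by_cases hx : x ∈ Y
        · have hxX : x ∉ X := fun h => hd x h hx
          simp [hk₀, hx, hxX]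
        · simp [hx]
      · funext x
        by_cases hx : x ∈ Y
        · simp [hk₁, hx]
        · simp [hx]
    rw [e1, e2, mul_comm]
  · push_neg at hij
    obtain ⟨x, hxX, hxY, hne⟩ := hij
    rw [Finset.sum_eq_zero, Finset.sum_eq_zero]
    · intro k _
      by_cases h : i x = k x
      · rw [hA.1 k j ⟨x, hxX, h ▸ hne⟩, mul_zero]
      · rw [hB.1 i k ⟨x, hxY, h⟩, zero_mul]
    · intro k _
      by_cases h : i x = k x
      · rw [hB.1 k j ⟨x, hxY, h ▸ hne⟩, mul_zero]
      · rw [hA.1 i k ⟨x, hxX, h⟩, zero_mul]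
lemma supp'_mul {X Y : Finset (Fin n)} {A B : Op (Fin n) d}
    (hA : Supp' X A) (hB : Supp' Y B) : Supp' (X ∪ Y) (A * B) := by
  constructor
  · rintro i j ⟨x, hx, hne⟩
    have hxX : x ∉ X := fun h => hx (Finset.mem_union_left _ h)
    have hxY : x ∉ Y := fun h => hx (Finset.mem_union_right _ h)
    rw [Matrix.mul_apply]
    apply Finset.sum_eq_zero
    intro k _
    by_cases h : i x = k x
    · rw [hB.1 k j ⟨x, hxY, h ▸ hne⟩, mul_zero]
    · rw [hA.1 i k ⟨x, hxX, h⟩, zero_mul]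
  · intro i j w hij
    set pi : Fin n → Fin d := fun x => if x ∈ X ∪ Y then i x else w x with hpi
    set pj : Fin n → Fin d := fun x => if x ∈ X ∪ Y then j x else w x with hpj
    set e : (Fin n → Fin d) ≃ (Fin n → Fin d) :=
      Equiv.piCongrRight (fun x =>
        if x ∈ X ∪ Y then Equiv.refl (Fin d) else Equiv.swap (i x) (w x)) with he
    have heapp : ∀ (k : Fin n → Fin d) (x : Fin n),
        e k x = if x ∈ X ∪ Y then k x else Equiv.swap (i x) (w x) (k x) := by
      intro k x
      have h0 : e k x
          = (if x ∈ X ∪ Y then Equiv.refl (Fin d) else Equiv.swap (i x) (w x)) (k x) := by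
        rw [he]; rfl
      rw [h0]
      by_cases hx : x ∈ X ∪ Y
      · rw [if_pos hx, if_pos hx]; rfl
      · rw [if_neg hx, if_neg hx]
    rw [Matrix.mul_apply, Matrix.mul_apply,
      ← Equiv.sum_comp e (fun k => A i k * B k j)]
    apply Finset.sum_congr rfl
    intro k _
    have keyA : ∀ x, x ∉ X → (i x = e k x ↔ pi x = k x) := by
      intro x hx
      by_cases hxc : x ∈ X ∪ Y
      · have hxY : x ∈ Y := by
          rcases Finset.mem_union.mp hxc with h | h
          · exact absurd h hx
          · exact h
        rw [heapp, if_pos hxc, hpi]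
        simp [hxc]
      · rw [heapp, if_neg hxc, hpi]
        simp only [if_neg hxc]
        constructor
        · intro h
          have := congrArg (Equiv.swap (i x) (w x)) h
          simpa using this
        · intro h
          rw [← h, Equiv.swap_apply_right]
    have keyB : ∀ x, x ∉ Y → (e k x = j x ↔ k x = pj x) := by
      intro x hx
      by_cases hxc : x ∈ X ∪ Y
      · rw [heapp, if_pos hxc, hpj]
        simp [hxc]
      · have hij' : i x = j x := hij x (by
          intro h; exact hxc h)
        rw [heapp, if_neg hxc, hpj]
        simp only [if_neg hxc]
        rw [← hij']
        constructor
        · intro h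
          have := congrArg (Equiv.swap (i x) (w x)) h
          simpa using this
        · intro h
          rw [h, Equiv.swap_apply_right]
    have eA : A i (e k) = A pi k := by
      by_cases hc : ∀ x, x ∉ X → i x = e k x
      · rw [hA.2 i (e k) w hc, hA.2 pi k w (fun x hx => (keyA x hx).mp (hc x hx))]
        congr 1
        · funext x
          by_cases hx : x ∈ X
          · simp [hx, hpi, Finset.mem_union_left _ hx]
          · simp [hx]
        · funext x
          by_cases hx : x ∈ X
          · simp [hx, heapp, Finset.mem_union_left _ hx]
          · simp [hx]
      · push_neg at hc
        obtain ⟨x, hx, hne⟩ := hc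
        rw [hA.1 i (e k) ⟨x, hx, hne⟩,
          hA.1 pi k ⟨x, hx, fun h => hne ((keyA x hx).mpr h)⟩]
    have eB : B (e k) j = B k pj := by
      by_cases hc : ∀ x, x ∉ Y → e k x = j x
      · rw [hB.2 (e k) j w hc, hB.2 k pj w (fun x hx => (keyB x hx).mp (hc x hx))]
        congr 1
        · funext x
          by_cases hx : x ∈ Y
          · simp [hx, heapp, Finset.mem_union_right _ hx]
          · simp [hx]
        · funext x
          by_cases hx : x ∈ Y
          · simp [hx, hpj, Finset.mem_union_right _ hx]
          · simp [hx]
      · push_neg at hc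
        obtain ⟨x, hx, hne⟩ := hc
        rw [hB.1 (e k) j ⟨x, hx, hne⟩,
          hB.1 k pj ⟨x, hx, fun h => hne ((keyB x hx).mpr h)⟩]
    rw [eA, eB]

lemma opNorm_zero {m : Type*} [Fintype m] [DecidableEq m] :
    opNorm (0 : Matrix m m ℂ) = 0 := by
  unfold opNorm; rw [map_zero, norm_zero]

lemma opNorm_nonneg' {m : Type*} [Fintype m] [DecidableEq m] (A : Matrix m m ℂ) :
    0 ≤ opNorm A := norm_nonneg _

lemma opNorm_sum_le {m : Type*} [Fintype m] [DecidableEq m] {J : Type*} (s : Finset J)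
    (f : J → Matrix m m ℂ) : opNorm (∑ j ∈ s, f j) ≤ ∑ j ∈ s, opNorm (f j) := by
  unfold opNorm
  rw [map_sum]
  exact norm_sum_le _ _

lemma opNorm_comm_le {m : Type*} [Fintype m] [DecidableEq m] (A B : Matrix m m ℂ) :
    opNorm (A * B - B * A) ≤ 2 * opNorm A * opNorm B := by
  unfold opNorm
  rw [map_sub, map_mul, map_mul]
  set x := Matrix.toEuclideanCLM (𝕜 := ℂ) A
  set y := Matrix.toEuclideanCLM (𝕜 := ℂ) B
  calc ‖x * y - y * x‖ ≤ ‖x * y‖ + ‖y * x‖ := norm_sub_le _ _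
    _ ≤ ‖x‖ * ‖y‖ + ‖y‖ * ‖x‖ := add_le_add (norm_mul_le _ _) (norm_mul_le _ _)
    _ = 2 * ‖x‖ * ‖y‖ := by ring

lemma counting {n : ℕ} {d : ℕ} (Yj : Finset (Fin n)) (a : Finset (Fin n) → Op (Fin n) d) :
    ∑ X ∈ Finset.univ.filter (fun X => (X ∩ Yj).Nonempty), opNorm (a X)
      ≤ ∑ i ∈ Yj, ∑ X ∈ Finset.univ.filter (fun X : Finset (Fin n) => i ∈ X), opNorm (a X) := by
  have hnn : ∀ (X : Finset (Fin n)) (i : Fin n), 0 ≤ (if i ∈ X then opNorm (a X) else 0) := by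
    intro X i
    by_cases h : i ∈ X
    · rw [if_pos h]; exact opNorm_nonneg' _
    · rw [if_neg h]
  rw [Finset.sum_filter]
  calc ∑ X : Finset (Fin n), (if (X ∩ Yj).Nonempty then opNorm (a X) else 0)
      ≤ ∑ X : Finset (Fin n), ∑ i ∈ Yj, (if i ∈ X then opNorm (a X) else 0) := by
        apply Finset.sum_le_sum
        intro X _
        by_cases hX : (X ∩ Yj).Nonempty
        · rw [if_pos hX]
          obtain ⟨i₀, hi₀⟩ := hX
          have hi₀X : i₀ ∈ X := (Finset.mem_inter.mp hi₀).1
          have hi₀Y : i₀ ∈ Yj := (Finset.mem_inter.mp hi₀).2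
          have := Finset.single_le_sum
            (f := fun i => if i ∈ X then opNorm (a X) else 0)
            (fun i _ => hnn X i) hi₀Y
          simpa [hi₀X] using this
        · rw [if_neg hX]
          exact Finset.sum_nonneg (fun i _ => hnn X i)
    _ = ∑ i ∈ Yj, ∑ X : Finset (Fin n), (if i ∈ X then opNorm (a X) else 0) :=
        Finset.sum_comm
    _ = ∑ i ∈ Yj, ∑ X ∈ Finset.univ.filter (fun X : Finset (Fin n) => i ∈ X), opNorm (a X) := by
        apply Finset.sum_congr rfl
        intro i _
        rw [Finset.sum_filter]

/-- Decomposition of an operator into a sum of locally supported pieces with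
controlled total norm. -/
def Decomp {n d : ℕ} (C : ℝ) (K : ℕ) (B : Op (Fin n) d) : Prop :=
  ∃ (N : ℕ) (b : Fin N → Op (Fin n) d) (Y : Fin N → Finset (Fin n)),
    B = ∑ j, b j ∧ (∀ j, Supp' (Y j) (b j)) ∧ (∀ j, (Y j).card ≤ K) ∧
      ∑ j, opNorm (b j) ≤ C

lemma Decomp.opNorm_le {n d : ℕ} {C : ℝ} {K : ℕ} {B : Op (Fin n) d}
    (h : Decomp C K B) : opNorm B ≤ C := by
  obtain ⟨N, b, Y, rfl, _, _, hn⟩ := h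
  exact le_trans (opNorm_sum_le _ _) hn

lemma decomp_step {n d : ℕ} {C : ℝ} {K kk : ℕ} {gg : ℝ} (hg0 : 0 ≤ gg)
    (a : Finset (Fin n) → Op (Fin n) d)
    (hsupp : ∀ X, Supp' X (a X))
    (hcard : ∀ X, a X ≠ 0 → X.card ≤ kk)
    (hga : ∀ i : Fin n, ∑ X ∈ Finset.univ.filter (fun X => i ∈ X), opNorm (a X) ≤ gg)
    {B : Op (Fin n) d} (hB : Decomp C K B) :
    Decomp (2 * gg * K * C) (K + kk) ((∑ X, a X) * B - B * ∑ X, a X) := by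
  classical
  obtain ⟨N, b, Y, hBsum, hsuppb, hcardb, hnorm⟩ := hB
  set f : Fin N × Finset (Fin n) → Op (Fin n) d :=
    fun p => a p.2 * b p.1 - b p.1 * a p.2 with hf
  set Z : Fin N × Finset (Fin n) → Finset (Fin n) :=
    fun p => if a p.2 ≠ 0 ∧ (p.2 ∩ Y p.1).Nonempty then Y p.1 ∪ p.2 else ∅ with hZ
  set e := (Fintype.equivFin (Fin N × Finset (Fin n))).symm with he
  refine ⟨Fintype.card (Fin N × Finset (Fin n)), fun m => f (e m), fun m => Z (e m),
    ?_, ?_, ?_, ?_⟩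
  · rw [hBsum, Equiv.sum_comp e f, Fintype.sum_prod_type]
    have h1 : (∑ X, a X) * (∑ j, b j) = ∑ j, ∑ X, a X * b j := by
      rw [Finset.sum_mul_sum]; exact Finset.sum_comm
    have h2 : (∑ j, b j) * (∑ X, a X) = ∑ j, ∑ X, b j * a X := by
      rw [Finset.sum_mul_sum]
    rw [h1, h2, ← Finset.sum_sub_distrib]
    apply Finset.sum_congr rfl
    intro j _
    rw [← Finset.sum_sub_distrib]
  · intro m
    set p := e m with hp
    show Supp' (Z p) (f p)
    by_cases h : a p.2 ≠ 0 ∧ (p.2 ∩ Y p.1).Nonempty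
    · have hZp : Z p = Y p.1 ∪ p.2 := by rw [hZ]; exact if_pos h
      rw [hZp]
      apply supp'_sub
      · have := supp'_mul (hsupp p.2) (hsuppb p.1)
        rwa [Finset.union_comm] at this
      · exact supp'_mul (hsuppb p.1) (hsupp p.2)
    · have hZp : Z p = ∅ := by rw [hZ]; exact if_neg h
      have hfp : f p = 0 := by
        by_cases hz : a p.2 = 0
        · simp [hf, hz]
        · have hint : (p.2 ∩ Y p.1) = ∅ := by
            rw [← Finset.not_nonempty_iff_eq_empty]
            intro hne
            exact h ⟨hz, hne⟩
          have hdisj : ∀ x ∈ p.2, x ∉ Y p.1 := by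
            intro x hx hy
            have : x ∈ p.2 ∩ Y p.1 := Finset.mem_inter.mpr ⟨hx, hy⟩
            rw [hint] at this
            exact absurd this (Finset.notMem_empty x)
          have := supp'_comm hdisj (hsupp p.2) (hsuppb p.1)
          rw [hf]
          dsimp only
          rw [this, sub_self]
      rw [hZp, hfp]
      exact supp'_zero ∅
  · intro m
    set p := e m with hp
    show (Z p).card ≤ K + kk
    by_cases h : a p.2 ≠ 0 ∧ (p.2 ∩ Y p.1).Nonempty
    · have hZp : Z p = Y p.1 ∪ p.2 := by rw [hZ]; exact if_pos h
      rw [hZp]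
      calc (Y p.1 ∪ p.2).card ≤ (Y p.1).card + p.2.card := Finset.card_union_le _ _
        _ ≤ K + kk := Nat.add_le_add (hcardb p.1) (hcard p.2 h.1)
    · have hZp : Z p = ∅ := by rw [hZ]; exact if_neg h
      rw [hZp]
      exact Nat.zero_le _
  · rw [Equiv.sum_comp e (fun p => opNorm (f p)), Fintype.sum_prod_type]
    have key : ∀ j : Fin N, ∑ X, opNorm (f (j, X)) ≤ 2 * gg * K * opNorm (b j) := by
      intro j
      have hfilter : ∑ X ∈ Finset.univ.filter (fun X => (X ∩ Y j).Nonempty),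
          opNorm (f (j, X)) = ∑ X, opNorm (f (j, X)) := by
        apply Finset.sum_filter_of_ne
        intro X _ hne
        by_contra hcon
        apply hne
        have hint : (X ∩ Y j) = ∅ := Finset.not_nonempty_iff_eq_empty.mp hcon
        have hdisj : ∀ x ∈ X, x ∉ Y j := by
          intro x hx hy
          have : x ∈ X ∩ Y j := Finset.mem_inter.mpr ⟨hx, hy⟩
          rw [hint] at this
          exact absurd this (Finset.notMem_empty x)
        have hcomm := supp'_comm hdisj (hsupp X) (hsuppb j)
        have : f (j, X) = 0 := by rw [hf]; dsimp only; rw [hcomm, sub_self]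
        rw [this, opNorm_zero]
      rw [← hfilter]
      have hb0 : (0:ℝ) ≤ 2 * opNorm (b j) := by
        have := opNorm_nonneg' (b j); linarith
      calc ∑ X ∈ Finset.univ.filter (fun X => (X ∩ Y j).Nonempty), opNorm (f (j, X))
          ≤ ∑ X ∈ Finset.univ.filter (fun X => (X ∩ Y j).Nonempty),
              2 * opNorm (a X) * opNorm (b j) := by
            apply Finset.sum_le_sum
            intro X _
            exact opNorm_comm_le _ _
        _ = (2 * opNorm (b j)) *
              ∑ X ∈ Finset.univ.filter (fun X => (X ∩ Y j).Nonempty), opNorm (a X) := by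
            rw [Finset.mul_sum]
            apply Finset.sum_congr rfl
            intro X _
            ring
        _ ≤ (2 * opNorm (b j)) *
              ∑ i ∈ Y j, ∑ X ∈ Finset.univ.filter (fun X : Finset (Fin n) => i ∈ X),
                opNorm (a X) :=
            mul_le_mul_of_nonneg_left (counting (Y j) a) hb0
        _ ≤ (2 * opNorm (b j)) * ∑ _i ∈ Y j, gg :=
            mul_le_mul_of_nonneg_left (Finset.sum_le_sum fun i _ => hga i) hb0
        _ = (2 * opNorm (b j)) * (((Y j).card : ℝ) * gg) := by
            rw [Finset.sum_const, nsmul_eq_mul]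
        _ ≤ (2 * opNorm (b j)) * ((K : ℝ) * gg) := by
            apply mul_le_mul_of_nonneg_left _ hb0
            apply mul_le_mul_of_nonneg_right _ hg0
            exact_mod_cast hcardb j
        _ = 2 * gg * (K : ℝ) * opNorm (b j) := by ring
    calc ∑ j, ∑ X, opNorm (f (j, X)) ≤ ∑ j, 2 * gg * (K:ℝ) * opNorm (b j) :=
          Finset.sum_le_sum fun j _ => key j
      _ = 2 * gg * (K:ℝ) * ∑ j, opNorm (b j) := by rw [Finset.mul_sum]
      _ ≤ 2 * gg * (K:ℝ) * C := by
          apply mul_le_mul_of_nonneg_left hnorm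
          have : (0:ℝ) ≤ (K:ℝ) := Nat.cast_nonneg K
          nlinarith

lemma main_aux {n d : ℕ} : ∀ (M : ℕ) (kk : ℕ → ℕ) (gg : ℕ → ℝ)
    (a : ℕ → Finset (Fin n) → Op (Fin n) d),
    (∀ s, 0 ≤ gg s) → (∀ s X, Supp' X (a s X)) →
    (∀ s X, a s X ≠ 0 → X.card ≤ kk s) →
    (∀ s (i : Fin n), ∑ X ∈ Finset.univ.filter (fun X => i ∈ X), opNorm (a s X) ≤ gg s) →
    ∀ (K : ℕ) (C : ℝ) (B : Op (Fin n) d), Decomp C K B →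
    opNorm (List.foldl (fun acc A => A * acc - acc * A) B
        (List.ofFn fun s : Fin M => ∑ X : Finset (Fin n), a (s : ℕ) X))
      ≤ (∏ s ∈ Finset.range M,
          2 * gg s * ((K : ℝ) + ∑ t ∈ Finset.range s, (kk t : ℝ))) * C := by
  intro M
  induction M with
  | zero =>
    intro kk gg a _ _ _ _ K C B hB
    simpa using hB.opNorm_le
  | succ M ih =>
    intro kk gg a h0 h1 h2 h3 K C B hB
    have hstep := decomp_step (h0 0) (a 0) (h1 0) (h2 0) (h3 0) hB
    have ihh := ih (fun s => kk (s+1)) (fun s => gg (s+1)) (fun s => a (s+1))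
      (fun s => h0 _) (fun s X => h1 _ X) (fun s X => h2 _ X) (fun s i => h3 _ i)
      (K + kk 0) (2 * gg 0 * (K : ℝ) * C) _ hstep
    have hprod : (∏ s ∈ Finset.range M,
          2 * gg (s+1) * (((K + kk 0 : ℕ) : ℝ) + ∑ t ∈ Finset.range s, ((kk (t+1) : ℕ) : ℝ)))
            * (2 * gg 0 * (K : ℝ) * C)
        = (∏ s ∈ Finset.range (M+1),
            2 * gg s * ((K : ℝ) + ∑ t ∈ Finset.range s, (kk t : ℝ))) * C := by
      have hterm : ∀ s : ℕ,
          2 * gg (s+1) * (((K + kk 0 : ℕ) : ℝ) + ∑ t ∈ Finset.range s, ((kk (t+1) : ℕ) : ℝ))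
            = 2 * gg (s+1) * ((K : ℝ) + ∑ t ∈ Finset.range (s+1), ((kk t : ℕ) : ℝ)) := by
        intro s
        rw [Finset.sum_range_succ']
        push_cast
        ring
      rw [Finset.prod_congr rfl (fun s _ => hterm s), Finset.prod_range_succ']
      simp only [Finset.range_zero, Finset.sum_empty, add_zero]
      ring
    rw [List.ofFn_succ, List.foldl_cons]
    simp only [Fin.val_succ, Fin.val_zero]
    exact le_trans ihh (le_of_eq hprod)

lemma fin_sum_Iio {M : ℕ} (s : Fin M) (F : ℕ → ℝ) :
    ∑ t ∈ Finset.Iio s, F (t : ℕ) = ∑ t ∈ Finset.range (s : ℕ), F t := by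
  rw [← Nat.Iio_eq_range, ← Fin.map_valEmbedding_Iio, Finset.sum_map]
  rfl

lemma matrix_mul_comm_of_subsingleton {m : Type*} [Fintype m] [DecidableEq m] [Subsingleton m]
    (A B : Matrix m m ℂ) : A * B = B * A := by
  ext i j
  rw [Matrix.mul_apply, Matrix.mul_apply]
  apply Finset.sum_congr rfl
  intro kx _
  rw [Subsingleton.elim i kx, Subsingleton.elim j kx]
  exact mul_comm _ _

lemma foldl_comm_zero {m : Type*} [Fintype m] [DecidableEq m] (l : List (Matrix m m ℂ)) :
    List.foldl (fun acc A => A * acc - acc * A) (0 : Matrix m m ℂ) l = 0 := by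
  induction l with
  | nil => rfl
  | cons A l ih =>
    rw [List.foldl_cons]
    have h : A * (0 : Matrix m m ℂ) - 0 * A = 0 := by
      rw [mul_zero, zero_mul, sub_self]
    rw [h]
    exact ih

end MultiCommAux

/-- **Norm bound for multi-commutators of local operators** (Lemma 11): let
`A_1,…,A_M` be operators on `n` qudits with `A_s = ∑_X a_{s,X}`, each `a_{s,X}` supported
on a set of at most `k_s` sites and `max_i ∑_{X∋i} ‖a_{s,X}‖ ≤ g_s`.  For every operator
`O` supported on `X₀`,
`‖ad_{A_M} ⋯ ad_{A_1}(O)‖ ≤ (∏_m 2 g_m K_m) ‖O‖`, where `K_m = |X₀| + ∑_{s<m} k_s`. -/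
theorem multi_commutator_norm_bound (n d M : ℕ)
    (k : Fin M → ℕ) (g : Fin M → ℝ)
    (a : Fin M → Finset (Fin n) → Op (Fin n) d)
    (hsupp : ∀ (s : Fin M) (X : Finset (Fin n)), SupportedOn (X : Set (Fin n)) (a s X))
    (hcard : ∀ (s : Fin M) (X : Finset (Fin n)), a s X ≠ 0 → X.card ≤ k s)
    (hg : ∀ (s : Fin M) (i : Fin n),
      ∑ X ∈ Finset.univ.filter (fun X : Finset (Fin n) => i ∈ X), opNorm (a s X) ≤ g s)
    (X₀ : Finset (Fin n)) (O : Op (Fin n) d) (hO : SupportedOn (X₀ : Set (Fin n)) O) :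
    opNorm (List.foldl (fun acc A => A * acc - acc * A) O
        (List.ofFn fun s : Fin M => ∑ X : Finset (Fin n), a s X))
      ≤ (∏ s : Fin M, 2 * g s * ((X₀.card : ℝ) + ∑ t ∈ Finset.Iio s, (k t : ℝ))) *
          opNorm O := by
  classical
  rcases Nat.eq_zero_or_pos M with hM | hM
  · subst hM
    simp
  rcases Nat.eq_zero_or_pos n with hn | hn
  · subst hn
    obtain ⟨M', rfl⟩ : ∃ M', M = M' + 1 := ⟨M - 1, (Nat.succ_pred_eq_of_pos hM).symm⟩
    have hfold : List.foldl (fun acc A => A * acc - acc * A) O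
        (List.ofFn fun s : Fin (M' + 1) => ∑ X : Finset (Fin 0), a s X) = 0 := by
      rw [List.ofFn_succ, List.foldl_cons]
      have hbeta : (∑ X : Finset (Fin 0), a 0 X) * O - O * ∑ X : Finset (Fin 0), a 0 X
          = 0 := by
        haveI : Subsingleton (Fin 0 → Fin d) := ⟨fun f g => funext fun x => x.elim0⟩
        rw [matrix_mul_comm_of_subsingleton, sub_self]
      rw [hbeta]
      exact foldl_comm_zero _
    rw [hfold, opNorm_zero]
    have hX₀ : X₀ = ∅ := Finset.eq_empty_of_forall_notMem fun x => x.elim0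
    have hzero : (∏ s : Fin (M' + 1),
        2 * g s * ((X₀.card : ℝ) + ∑ t ∈ Finset.Iio s, (k t : ℝ))) = 0 := by
      apply Finset.prod_eq_zero (Finset.mem_univ (0 : Fin (M' + 1)))
      have hIio : Finset.Iio (0 : Fin (M' + 1)) = ∅ := by
        apply Finset.eq_empty_of_forall_notMem
        intro t ht
        rw [Finset.mem_Iio] at ht
        exact Nat.not_lt_zero _ (Fin.lt_def.mp ht)
      rw [hX₀, hIio]
      simp
    rw [hzero, zero_mul]
  · set k' : ℕ → ℕ := fun s => if h : s < M then k ⟨s, h⟩ else 0 with hk'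
    set g' : ℕ → ℝ := fun s => if h : s < M then g ⟨s, h⟩ else 0 with hg'
    set a' : ℕ → Finset (Fin n) → Op (Fin n) d :=
      fun s => if h : s < M then a ⟨s, h⟩ else 0 with ha'
    have hgnn : ∀ s : Fin M, 0 ≤ g s := fun s =>
      le_trans (Finset.sum_nonneg fun X _ => opNorm_nonneg' _) (hg s ⟨0, hn⟩)
    have h0' : ∀ s, 0 ≤ g' s := by
      intro s
      rw [hg']
      dsimp only
      split
      · exact hgnn _
      · exact le_refl 0
    have h1' : ∀ s X, Supp' X (a' s X) := by
      intro s X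
      rw [ha']
      dsimp only
      split
      · exact supp'_of_supportedOn (hsupp _ X)
      · rw [Pi.zero_apply]
        exact supp'_zero X
    have h2' : ∀ s X, a' s X ≠ 0 → X.card ≤ k' s := by
      intro s X hne
      rw [ha'] at hne
      rw [hk']
      dsimp only at hne ⊢
      by_cases h : s < M
      · rw [dif_pos h] at hne ⊢
        exact hcard _ X hne
      · rw [dif_neg h] at hne
        rw [Pi.zero_apply] at hne
        exact absurd rfl hne
    have h3' : ∀ (s : ℕ) (i : Fin n),
        ∑ X ∈ Finset.univ.filter (fun X => i ∈ X), opNorm (a' s X) ≤ g' s := by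
      intro s i
      rw [ha', hg']
      dsimp only
      by_cases h : s < M
      · rw [dif_pos h, dif_pos h]
        exact hg _ i
      · rw [dif_neg h, dif_neg h]
        apply le_of_eq
        apply Finset.sum_eq_zero
        intro X _
        rw [Pi.zero_apply, opNorm_zero]
    have hdec : Decomp (opNorm O) X₀.card O :=
      ⟨1, fun _ => O, fun _ => X₀, by simp, fun _ => supp'_of_supportedOn hO,
        fun _ => le_refl _, by simp⟩
    have main := main_aux M k' g' a' h0' h1' h2' h3' X₀.card (opNorm O) O hdec
    have hlist : (List.ofFn fun s : Fin M => ∑ X : Finset (Fin n), a s X)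
        = (List.ofFn fun s : Fin M => ∑ X : Finset (Fin n), a' (s : ℕ) X) := by
      apply congrArg
      funext s
      apply Finset.sum_congr rfl
      intro X _
      rw [ha']
      dsimp only
      rw [dif_pos s.isLt, Fin.eta]
    have hprod : (∏ s : Fin M, 2 * g s * ((X₀.card : ℝ) + ∑ t ∈ Finset.Iio s, (k t : ℝ)))
        = ∏ s ∈ Finset.range M,
            2 * g' s * ((X₀.card : ℝ) + ∑ t ∈ Finset.range s, (k' t : ℝ)) := by
      rw [← Fin.prod_univ_eq_prod_range
        (fun s => 2 * g' s * ((X₀.card : ℝ) + ∑ t ∈ Finset.range s, (k' t : ℝ))) M]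
      apply Finset.prod_congr rfl
      intro s _
      have hgs : g' (s : ℕ) = g s := by
        rw [hg']
        dsimp only
        rw [dif_pos s.isLt, Fin.eta]
      have hsum : ∑ t ∈ Finset.Iio s, (k t : ℝ) = ∑ t ∈ Finset.range (s : ℕ), (k' t : ℝ) := by
        rw [← fin_sum_Iio s (fun t => (k' t : ℝ))]
        apply Finset.sum_congr rfl
        intro t _
        rw [hk']
        dsimp only
        rw [dif_pos t.isLt, Fin.eta]
      rw [hgs, hsum]
    rw [hlist, hprod]
    exact main


end Paper
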